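/- For every cyclic word f : ZMod 4 → Fin 3 containing the color p exactly twice and the colors r and b each exactly once, there exist insertions of one new element of color r and one new element of color b (at arbitrary gaps, not required to be adjacent) extending f to a length-6 cyclic word that satisfies the K3-constraint. The same holds with the K3-constraint replaced by the P3-constraint. -/
import Mathlib


namespace SATR

def red : Fin 3 := 0
def blue : Fin 3 := 1
def purple : Fin 3 := 2

/-- `x` lies strictly inside the cyclic arc from `a` to `c` (in the `+1` direction). -/
def arcBetween {n : ℕ} [NeZero n] (a x c : ZMod n) : Prop :=
  0 < (x - a).val ∧ (x - a).val < (c - a).val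

/-- Colors `c` and `c'` alternate in the cyclic word `f`: there are two positions of
color `c` such that each of the two open cyclic arcs they determine contains a
position of color `c'`. -/
def Alternates {n : ℕ} [NeZero n] (f : ZMod n → Fin 3) (c c' : Fin 3) : Prop :=
  ∃ i1 i2 j1 j2 : ZMod n, f i1 = c ∧ f i2 = c ∧ i1 ≠ i2 ∧
    f j1 = c' ∧ f j2 = c' ∧ arcBetween i1 j1 i2 ∧ arcBetween i2 j2 i1

/-- The K3-constraint: all three pairs of distinct colors alternate. -/
def K3Constraint (w : ZMod 6 → Fin 3) : Prop :=
  Alternates w red blue ∧ Alternates w red purple ∧ Alternates w blue purple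

/-- The P3-constraint: r–p and b–p alternate, r–b do not. -/
def P3Constraint (w : ZMod 6 → Fin 3) : Prop :=
  Alternates w red purple ∧ Alternates w blue purple ∧ ¬ Alternates w red blue

/-- Number of occurrences of color `c` in the cyclic word `f`. -/
def count {n : ℕ} [NeZero n] (f : ZMod n → Fin 3) (c : Fin 3) : ℕ :=
  (Finset.univ.filter fun i => f i = c).card

/-- Insert a new element of color `c` into the gap right after position `g`. -/
def insertAt {n : ℕ} [NeZero n] (f : ZMod n → Fin 3) (g : ZMod n) (c : Fin 3) :
    ZMod (n + 1) → Fin 3 :=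
  fun j =>
    if j.val = g.val + 1 then c
    else if j.val ≤ g.val then f (j.val : ZMod n)
    else f ((j.val - 1 : ℕ) : ZMod n)

/-- Insert `c1` right after position `g`, and `c2` immediately (cyclically) after `c1`,
so the two new elements are cyclically consecutive. -/
def insertPair {n : ℕ} [NeZero n] (f : ZMod n → Fin 3) (g : ZMod n) (c1 c2 : Fin 3) :
    ZMod (n + 2) → Fin 3 :=
  insertAt (insertAt f g c1) ((g.val + 1 : ℕ) : ZMod (n + 1)) c2

/-- The cyclic distance between two positions: the minimum of the two arc lengths. -/
def cycDist {n : ℕ} [NeZero n] (i j : ZMod n) : ℕ :=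
  min (j - i).val (i - j).val

instance {n : ℕ} [NeZero n] (a x c : ZMod n) : Decidable (arcBetween a x c) := by
  unfold arcBetween; infer_instance

instance {n : ℕ} [NeZero n] (f : ZMod n → Fin 3) (c c' : Fin 3) :
    Decidable (Alternates f c c') := by
  unfold Alternates; infer_instance

instance (w : ZMod 6 → Fin 3) : Decidable (K3Constraint w) := by
  unfold K3Constraint; infer_instance

instance (w : ZMod 6 → Fin 3) : Decidable (P3Constraint w) := by
  unfold P3Constraint; infer_instance

set_option maxHeartbeats 1000000 in
lemma case_0 :
    (∃ (g1 : ZMod 4) (g2 : ZMod 5),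
        K3Constraint (insertAt (insertAt (fun i : ZMod 4 => ![red, blue, purple, purple] i) g1 red) g2 blue)) ∧
    (∃ (g1 : ZMod 4) (g2 : ZMod 5),
        P3Constraint (insertAt (insertAt (fun i : ZMod 4 => ![red, blue, purple, purple] i) g1 red) g2 blue)) := by
  decide

set_option maxHeartbeats 1000000 in
lemma case_1 :
    (∃ (g1 : ZMod 4) (g2 : ZMod 5),
        K3Constraint (insertAt (insertAt (fun i : ZMod 4 => ![red, purple, blue, purple] i) g1 red) g2 blue)) ∧
    (∃ (g1 : ZMod 4) (g2 : ZMod 5),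
        P3Constraint (insertAt (insertAt (fun i : ZMod 4 => ![red, purple, blue, purple] i) g1 red) g2 blue)) := by
  decide

set_option maxHeartbeats 1000000 in
lemma case_2 :
    (∃ (g1 : ZMod 4) (g2 : ZMod 5),
        K3Constraint (insertAt (insertAt (fun i : ZMod 4 => ![red, purple, purple, blue] i) g1 red) g2 blue)) ∧
    (∃ (g1 : ZMod 4) (g2 : ZMod 5),
        P3Constraint (insertAt (insertAt (fun i : ZMod 4 => ![red, purple, purple, blue] i) g1 red) g2 blue)) := by
  decide

set_option maxHeartbeats 1000000 in
lemma case_3 :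
    (∃ (g1 : ZMod 4) (g2 : ZMod 5),
        K3Constraint (insertAt (insertAt (fun i : ZMod 4 => ![blue, red, purple, purple] i) g1 red) g2 blue)) ∧
    (∃ (g1 : ZMod 4) (g2 : ZMod 5),
        P3Constraint (insertAt (insertAt (fun i : ZMod 4 => ![blue, red, purple, purple] i) g1 red) g2 blue)) := by
  decide

set_option maxHeartbeats 1000000 in
lemma case_4 :
    (∃ (g1 : ZMod 4) (g2 : ZMod 5),
        K3Constraint (insertAt (insertAt (fun i : ZMod 4 => ![purple, red, blue, purple] i) g1 red) g2 blue)) ∧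
    (∃ (g1 : ZMod 4) (g2 : ZMod 5),
        P3Constraint (insertAt (insertAt (fun i : ZMod 4 => ![purple, red, blue, purple] i) g1 red) g2 blue)) := by
  decide

set_option maxHeartbeats 1000000 in
lemma case_5 :
    (∃ (g1 : ZMod 4) (g2 : ZMod 5),
        K3Constraint (insertAt (insertAt (fun i : ZMod 4 => ![purple, red, purple, blue] i) g1 red) g2 blue)) ∧
    (∃ (g1 : ZMod 4) (g2 : ZMod 5),
        P3Constraint (insertAt (insertAt (fun i : ZMod 4 => ![purple, red, purple, blue] i) g1 red) g2 blue)) := by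
  decide

set_option maxHeartbeats 1000000 in
lemma case_6 :
    (∃ (g1 : ZMod 4) (g2 : ZMod 5),
        K3Constraint (insertAt (insertAt (fun i : ZMod 4 => ![blue, purple, red, purple] i) g1 red) g2 blue)) ∧
    (∃ (g1 : ZMod 4) (g2 : ZMod 5),
        P3Constraint (insertAt (insertAt (fun i : ZMod 4 => ![blue, purple, red, purple] i) g1 red) g2 blue)) := by
  decide

set_option maxHeartbeats 1000000 in
lemma case_7 :
    (∃ (g1 : ZMod 4) (g2 : ZMod 5),
        K3Constraint (insertAt (insertAt (fun i : ZMod 4 => ![purple, blue, red, purple] i) g1 red) g2 blue)) ∧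
    (∃ (g1 : ZMod 4) (g2 : ZMod 5),
        P3Constraint (insertAt (insertAt (fun i : ZMod 4 => ![purple, blue, red, purple] i) g1 red) g2 blue)) := by
  decide

set_option maxHeartbeats 1000000 in
lemma case_8 :
    (∃ (g1 : ZMod 4) (g2 : ZMod 5),
        K3Constraint (insertAt (insertAt (fun i : ZMod 4 => ![purple, purple, red, blue] i) g1 red) g2 blue)) ∧
    (∃ (g1 : ZMod 4) (g2 : ZMod 5),
        P3Constraint (insertAt (insertAt (fun i : ZMod 4 => ![purple, purple, red, blue] i) g1 red) g2 blue)) := by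
  decide

set_option maxHeartbeats 1000000 in
lemma case_9 :
    (∃ (g1 : ZMod 4) (g2 : ZMod 5),
        K3Constraint (insertAt (insertAt (fun i : ZMod 4 => ![blue, purple, purple, red] i) g1 red) g2 blue)) ∧
    (∃ (g1 : ZMod 4) (g2 : ZMod 5),
        P3Constraint (insertAt (insertAt (fun i : ZMod 4 => ![blue, purple, purple, red] i) g1 red) g2 blue)) := by
  decide

set_option maxHeartbeats 1000000 in
lemma case_10 :
    (∃ (g1 : ZMod 4) (g2 : ZMod 5),
        K3Constraint (insertAt (insertAt (fun i : ZMod 4 => ![purple, blue, purple, red] i) g1 red) g2 blue)) ∧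
    (∃ (g1 : ZMod 4) (g2 : ZMod 5),
        P3Constraint (insertAt (insertAt (fun i : ZMod 4 => ![purple, blue, purple, red] i) g1 red) g2 blue)) := by
  decide

set_option maxHeartbeats 1000000 in
lemma case_11 :
    (∃ (g1 : ZMod 4) (g2 : ZMod 5),
        K3Constraint (insertAt (insertAt (fun i : ZMod 4 => ![purple, purple, blue, red] i) g1 red) g2 blue)) ∧
    (∃ (g1 : ZMod 4) (g2 : ZMod 5),
        P3Constraint (insertAt (insertAt (fun i : ZMod 4 => ![purple, purple, blue, red] i) g1 red) g2 blue)) := by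
  decide

set_option maxHeartbeats 8000000 in
/-- The K3^{-r,b}- and P3^{-r,b}-constraints are always satisfiable: every length-4
cyclic word with two purples, one red and one blue can be extended by inserting one
new red and one new blue at arbitrary gaps to a length-6 word satisfying the
K3-constraint, and likewise for the P3-constraint. -/
theorem k3_and_p3_minus_r_b_always_satisfiable
    (f : ZMod 4 → Fin 3)
    (hp : count f purple = 2) (hr : count f red = 1) (hb : count f blue = 1) :
    (∃ (g1 : ZMod 4) (g2 : ZMod 5),
        K3Constraint (insertAt (insertAt f g1 red) g2 blue)) ∧
    (∃ (g1 : ZMod 4) (g2 : ZMod 5),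
        P3Constraint (insertAt (insertAt f g1 red) g2 blue)) := by
  obtain ⟨a, ha⟩ : ∃ x, f 0 = x := ⟨_, rfl⟩
  obtain ⟨b, hb2⟩ : ∃ x, f 1 = x := ⟨_, rfl⟩
  obtain ⟨c, hc⟩ : ∃ x, f 2 = x := ⟨_, rfl⟩
  obtain ⟨d, hd⟩ : ∃ x, f 3 = x := ⟨_, rfl⟩
  have hf : f = fun i : ZMod 4 => ![a, b, c, d] i := by
    funext i
    fin_cases i
    · exact ha
    · exact hb2
    · exact hc
    · exact hd
  rw [hf] at hp hr hb ⊢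
  clear ha hb2 hc hd hf
  fin_cases a <;> fin_cases b <;> fin_cases c <;> fin_cases d <;>
    first
      | exact absurd hp (by decide)
      | exact absurd hr (by decide)
      | exact absurd hb (by decide)
      | exact case_0
      | exact case_1
      | exact case_2
      | exact case_3
      | exact case_4
      | exact case_5
      | exact case_6
      | exact case_7
      | exact case_8
      | exact case_9
      | exact case_10
      | exact case_11

end SATR
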